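/- For the balanced triangular Polya urn with colors x, y, w, replacement matrix adding θ x-balls after drawing x, adding δ y-balls and λ = θ−δ w-balls after drawing y, and adding θ w-balls after drawing w, with initial composition (a_0, b_0, c_0) and t_0 = a_0+b_0+c_0, the l-th factorial moment of the number X_n of x-balls at time n satisfies E[(X_n)_l] = θ^l · ((a_0/θ)^{(l)} / (t_0/θ)^{(l)}) · n^l + O(n^{l−1}), where x^{(l)} = Γ(x+l)/Γ(x) is the rising factorial. -/

import Mathlib

open MeasureTheory ProbabilityTheory Filter Set Asymptotics

/-- Balanced triangular Pólya urn with colors `x, y, w`, driven by a sequence `U` of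
uniform random numbers on `[0,1)`: drawing `x` adds `θ` `x`-balls, drawing `y` adds
`δ` `y`-balls and `λ = θ - δ` `w`-balls, drawing `w` adds `θ` `w`-balls. -/
noncomputable def urn3 (θ δ a0 b0 c0 : ℝ) (U : ℕ → ℝ) : ℕ → ℝ × ℝ × ℝ
  | 0 => (a0, b0, c0)
  | n + 1 =>
      let s := urn3 θ δ a0 b0 c0 U n
      let tt := s.1 + s.2.1 + s.2.2
      if U n < s.1 / tt then (s.1 + θ, s.2.1, s.2.2)
      else if U n < (s.1 + s.2.1) / tt then (s.1, s.2.1 + δ, s.2.2 + (θ - δ))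
      else (s.1, s.2.1, s.2.2 + θ)

/-- Generalized rising factorial `x^{(s)} = Γ(x+s)/Γ(x)`. -/
noncomputable def risingFact (x s : ℝ) : ℝ := Real.Gamma (x + s) / Real.Gamma x

variable {θ δ a0 b0 c0 : ℝ}

lemma urn3_total (V : ℕ → ℝ) (n : ℕ) :
    (urn3 θ δ a0 b0 c0 V n).1 + (urn3 θ δ a0 b0 c0 V n).2.1 + (urn3 θ δ a0 b0 c0 V n).2.2
      = a0 + b0 + c0 + n * θ := by
  induction n with
  | zero => simp [urn3]
  | succ n ih =>
    rw [urn3]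
    push_cast
    split_ifs <;> simp <;> linarith

lemma urn3_fst_succ (V : ℕ → ℝ) (n : ℕ) :
    (urn3 θ δ a0 b0 c0 V (n + 1)).1 =
      if V n < (urn3 θ δ a0 b0 c0 V n).1 / (a0 + b0 + c0 + n * θ) then
        (urn3 θ δ a0 b0 c0 V n).1 + θ
      else (urn3 θ δ a0 b0 c0 V n).1 := by
  rw [urn3]
  simp only [urn3_total V n]
  split_ifs <;> rfl

lemma urn3_comp_ge (hθ : 0 < θ) (hδ : 0 < δ) (hδθ : δ ≤ θ) (V : ℕ → ℝ) (n : ℕ) :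
    a0 ≤ (urn3 θ δ a0 b0 c0 V n).1 ∧ b0 ≤ (urn3 θ δ a0 b0 c0 V n).2.1 ∧
      c0 ≤ (urn3 θ δ a0 b0 c0 V n).2.2 := by
  induction n with
  | zero => simp [urn3]
  | succ n ih =>
    rw [urn3]
    split_ifs <;> simp <;> constructor <;> try constructor
    all_goals first | linarith [ih.1] | linarith [ih.2.1] | linarith [ih.2.2]

lemma urn3_fst_le (hθ : 0 < θ) (V : ℕ → ℝ) (n : ℕ) :
    (urn3 θ δ a0 b0 c0 V n).1 ≤ a0 + n * θ := by
  induction n with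
  | zero => simp [urn3]
  | succ n ih =>
    rw [urn3_fst_succ]
    push_cast
    split_ifs <;> linarith

lemma urn3_congr {V V' : ℕ → ℝ} {n : ℕ} (h : ∀ i < n, V i = V' i) :
    urn3 θ δ a0 b0 c0 V n = urn3 θ δ a0 b0 c0 V' n := by
  induction n with
  | zero => rfl
  | succ n ih =>
    have h' : ∀ i < n, V i = V' i := fun i hi => h i (Nat.lt_succ_of_lt hi)
    rw [urn3, urn3, ih h', h n (Nat.lt_succ_self n)]

lemma measurable_urn3 (n : ℕ) :
    Measurable (fun g : ℕ → ℝ => urn3 θ δ a0 b0 c0 g n) := by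
  induction n with
  | zero => exact measurable_const
  | succ n ih =>
    rw [show (fun g : ℕ → ℝ => urn3 θ δ a0 b0 c0 g (n+1)) = fun g =>
      let s := urn3 θ δ a0 b0 c0 g n
      let tt := s.1 + s.2.1 + s.2.2
      if g n < s.1 / tt then (s.1 + θ, s.2.1, s.2.2)
      else if g n < (s.1 + s.2.1) / tt then (s.1, s.2.1 + δ, s.2.2 + (θ - δ))
      else (s.1, s.2.1, s.2.2 + θ) from rfl]
    simp only
    have h1 : Measurable fun g : ℕ → ℝ => (urn3 θ δ a0 b0 c0 g n).1 := ih.fst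
    have h2 : Measurable fun g : ℕ → ℝ => (urn3 θ δ a0 b0 c0 g n).2.1 := ih.snd.fst
    have h3 : Measurable fun g : ℕ → ℝ => (urn3 θ δ a0 b0 c0 g n).2.2 := ih.snd.snd
    have hev : Measurable fun g : ℕ → ℝ => g n := measurable_pi_apply n
    refine Measurable.ite ?_ (by fun_prop) (Measurable.ite ?_ (by fun_prop) (by fun_prop))
    · exact measurableSet_lt hev (h1.div ((h1.add h2).add h3))
    · exact measurableSet_lt hev ((h1.add h2).div ((h1.add h2).add h3))

lemma urn3_step_integral
    {Ω : Type*} [MeasurableSpace Ω] (P : Measure Ω) [IsProbabilityMeasure P]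
    (V : ℕ → Ω → ℝ) (hVm : ∀ i, Measurable (V i))
    (hindep : iIndepFun V P)
    (hunif : ∀ i, Measure.map (V i) P = volume.restrict (Set.Ico (0:ℝ) 1))
    (hθ : 0 < θ) (hδ : 0 < δ) (hδθ : δ ≤ θ)
    (ha0 : 0 < a0) (hb0 : 0 < b0) (hc0 : 0 < c0)
    (f : ℝ → ℝ) (hf : Continuous f) (n : ℕ) :
    ∫ ω, f ((urn3 θ δ a0 b0 c0 (fun j => V j ω) (n+1)).1) ∂P
      = ∫ ω, (((urn3 θ δ a0 b0 c0 (fun j => V j ω) n).1 / (a0+b0+c0+n*θ))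
            * f ((urn3 θ δ a0 b0 c0 (fun j => V j ω) n).1 + θ)
          + (1 - (urn3 θ δ a0 b0 c0 (fun j => V j ω) n).1 / (a0+b0+c0+n*θ))
            * f ((urn3 θ δ a0 b0 c0 (fun j => V j ω) n).1)) ∂P := by
  have ht : (0:ℝ) < a0 + b0 + c0 + n * θ := by positivity
  set t : ℝ := a0 + b0 + c0 + n * θ with htdef
  set Xn : Ω → ℝ := fun ω => (urn3 θ δ a0 b0 c0 (fun j => V j ω) n).1 with hXndef
  have hXnm : Measurable Xn :=
    (measurable_urn3 n).fst.comp (measurable_pi_lambda _ fun j => hVm j)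
  -- independence of Xn and V n
  have hInd : IndepFun Xn (V n) P := by
    have hAB := hindep.indepFun_finset (Finset.range n) {n}
      (Finset.disjoint_singleton_right.mpr (by simp)) hVm
    set φ : (({ x // x ∈ Finset.range n }) → ℝ) → ℝ := fun g =>
      (urn3 θ δ a0 b0 c0 (fun j => if h : j ∈ Finset.range n then g ⟨j, h⟩ else 0) n).1
      with hφdef
    have hφ : Measurable φ := by
      apply (measurable_urn3 n).fst.comp
      apply measurable_pi_lambda
      intro j
      by_cases h : j ∈ Finset.range n
      · simpa [h] using measurable_pi_apply (⟨j, h⟩ : { x // x ∈ Finset.range n })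
      · simpa [h] using measurable_const
    set ψ : (({ x // x ∈ ({n} : Finset ℕ) }) → ℝ) → ℝ := fun g => g ⟨n, by simp⟩ with hψdef
    have hψ : Measurable ψ := measurable_pi_apply _
    have h2 := hAB.comp hφ hψ
    have e1 : (φ ∘ fun ω (i : { x // x ∈ Finset.range n }) => V i ω) = Xn := by
      funext ω
      simp only [Function.comp_apply, hφdef, hXndef]
      congr 1
      apply urn3_congr
      intro i hi
      simp [Finset.mem_range.mpr hi]
    have e2 : (ψ ∘ fun ω (i : { x // x ∈ ({n} : Finset ℕ) }) => V i ω) = V n := rfl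
    rwa [e1, e2] at h2
  have hmap : P.map (fun ω => (Xn ω, V n ω)) = (P.map Xn).prod (P.map (V n)) :=
    (indepFun_iff_map_prod_eq_prod_map_map hXnm.aemeasurable (hVm n).aemeasurable).mp hInd
  haveI hνP : IsProbabilityMeasure (volume.restrict (Set.Ico (0:ℝ) 1)) :=
    ⟨by simp [Real.volume_Ico]⟩
  haveI : IsProbabilityMeasure (P.map Xn) := Measure.isProbabilityMeasure_map hXnm.aemeasurable
  set G : ℝ × ℝ → ℝ := fun p => if p.2 < p.1 / t then f (p.1 + θ) else f p.1 with hGdef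
  have hGm : Measurable G := by
    apply Measurable.ite
    · exact measurableSet_lt measurable_snd (measurable_fst.div_const t)
    · exact hf.measurable.comp (measurable_fst.add_const θ)
    · exact hf.measurable.comp measurable_fst
  -- rewrite LHS
  have hL : ∫ ω, f ((urn3 θ δ a0 b0 c0 (fun j => V j ω) (n+1)).1) ∂P
      = ∫ ω, G (Xn ω, V n ω) ∂P := by
    apply integral_congr_ae
    apply ae_of_all
    intro ω
    show f ((urn3 θ δ a0 b0 c0 (fun j => V j ω) (n+1)).1) = G (Xn ω, V n ω)
    rw [urn3_fst_succ, apply_ite f]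
  rw [hL]
  have hpair : AEMeasurable (fun ω => (Xn ω, V n ω)) P :=
    (hXnm.aemeasurable.prodMk (hVm n).aemeasurable)
  rw [← integral_map hpair hGm.aestronglyMeasurable, hmap, hunif n]
  -- bounds for X_n
  have hXlb : ∀ ω, a0 ≤ Xn ω := fun ω => (urn3_comp_ge hθ hδ hδθ _ n).1
  have hXub : ∀ ω, Xn ω ≤ a0 + n * θ := fun ω => urn3_fst_le hθ _ n
  have hXae : ∀ᵐ x ∂(P.map Xn), x ∈ Set.Icc a0 (a0 + n * θ) :=
    (ae_map_iff hXnm.aemeasurable measurableSet_Icc).mpr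
      (ae_of_all _ fun ω => ⟨hXlb ω, hXub ω⟩)
  -- integrability of G on the product
  obtain ⟨C, hC⟩ := (isCompact_Icc (a := a0) (b := a0 + n * θ + θ)).exists_bound_of_continuousOn
    hf.continuousOn
  have hGbound : ∀ᵐ p ∂((P.map Xn).prod (volume.restrict (Set.Ico (0:ℝ) 1))),
      ‖G p‖ ≤ C := by
    have : ∀ᵐ p ∂((P.map Xn).prod (volume.restrict (Set.Ico (0:ℝ) 1))),
        p.1 ∈ Set.Icc a0 (a0 + n * θ) := by
      rw [Measure.ae_prod_iff_ae_ae (measurableSet_Icc.preimage measurable_fst)]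
      exact hXae.mono fun x hx => ae_of_all _ fun u => hx
    refine this.mono fun p hp => ?_
    have h1 : p.1 + θ ∈ Set.Icc a0 (a0 + n * θ + θ) := ⟨by linarith [hp.1], by linarith [hp.2]⟩
    have h2 : p.1 ∈ Set.Icc a0 (a0 + n * θ + θ) := ⟨hp.1, by linarith [hp.2]⟩
    simp only [hGdef]
    split_ifs
    · exact hC _ h1
    · exact hC _ h2
  have hGint : Integrable G ((P.map Xn).prod (volume.restrict (Set.Ico (0:ℝ) 1))) :=
    Integrable.mono' (integrable_const C) hGm.aestronglyMeasurable hGbound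
  rw [integral_prod G hGint]
  -- marginal integral
  set g : ℝ → ℝ := fun x => ∫ u, G (x, u) ∂(volume.restrict (Set.Ico (0:ℝ) 1)) with hgdef
  have hgm : StronglyMeasurable g := hGm.stronglyMeasurable.integral_prod_right'
  rw [show integral (Measure.map Xn P) g = ∫ x, g x ∂(Measure.map Xn P) from rfl,
    integral_map hXnm.aemeasurable hgm.aestronglyMeasurable]
  -- pointwise evaluation of g
  apply integral_congr_ae
  apply ae_of_all
  intro ω
  beta_reduce
  have hp0 : 0 ≤ Xn ω / t := div_nonneg (le_trans ha0.le (hXlb ω)) ht.le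
  have hp1 : Xn ω / t ≤ 1 := by
    rw [div_le_one ht]
    have htot := urn3_total (θ := θ) (δ := δ) (a0 := a0) (b0 := b0) (c0 := c0)
      (fun j => V j ω) n
    have hge := urn3_comp_ge (θ := θ) (δ := δ) (a0 := a0) (b0 := b0) (c0 := c0)
      hθ hδ hδθ (fun j => V j ω) n
    simp only [htdef]
    linarith [hge.2.1, hge.2.2]
  set p : ℝ := Xn ω / t with hpdef
  have hsplit : Set.Ico (0:ℝ) 1 = Set.Ico 0 p ∪ Set.Ico p 1 :=
    (Set.Ico_union_Ico_eq_Ico hp0 hp1).symm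
  have hdisj : Disjoint (Set.Ico (0:ℝ) p) (Set.Ico p 1) := by
    rw [Set.disjoint_left]
    rintro u ⟨_, h2⟩ ⟨h3, _⟩
    exact absurd h3 (not_le.2 h2)
  have heq1 : ∫ u in Set.Ico (0:ℝ) p, G (Xn ω, u) = (volume (Set.Ico (0:ℝ) p)).toReal • f (Xn ω + θ) := by
    rw [setIntegral_congr_fun measurableSet_Ico (g := fun _ => f (Xn ω + θ))
      (fun u hu => if_pos hu.2), setIntegral_const, measureReal_def]
  have heq2 : ∫ u in Set.Ico p 1, G (Xn ω, u) = (volume (Set.Ico p 1)).toReal • f (Xn ω) := by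
    rw [setIntegral_congr_fun measurableSet_Ico (g := fun _ => f (Xn ω))
      (fun u hu => if_neg (not_lt.2 hu.1)), setIntegral_const, measureReal_def]
  have hint1 : IntegrableOn (fun u => G (Xn ω, u)) (Set.Ico (0:ℝ) p) := by
    refine (integrableOn_congr_fun (g := fun _ => f (Xn ω + θ))
      (fun u hu => if_pos hu.2) measurableSet_Ico).mpr
      (integrableOn_const measure_Ico_lt_top.ne)
  have hint2 : IntegrableOn (fun u => G (Xn ω, u)) (Set.Ico p 1) := by
    refine (integrableOn_congr_fun (g := fun _ => f (Xn ω))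
      (fun u hu => if_neg (not_lt.2 hu.1)) measurableSet_Ico).mpr
      (integrableOn_const measure_Ico_lt_top.ne)
  have : g (Xn ω) = ∫ u in Set.Ico (0:ℝ) 1, G (Xn ω, u) := rfl
  rw [this, hsplit, setIntegral_union hdisj measurableSet_Ico hint1 hint2, heq1, heq2,
    Real.volume_Ico, Real.volume_Ico]
  rw [ENNReal.toReal_ofReal (by linarith), ENNReal.toReal_ofReal (by linarith)]
  simp only [smul_eq_mul]
  ring

lemma urn3_integrable_comp
    {Ω : Type*} [MeasurableSpace Ω] (P : Measure Ω) [IsProbabilityMeasure P]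
    (V : ℕ → Ω → ℝ) (hVm : ∀ i, Measurable (V i))
    (hθ : 0 < θ) (hδ : 0 < δ) (hδθ : δ ≤ θ)
    (f : ℝ → ℝ) (hf : Continuous f) (n : ℕ) :
    Integrable (fun ω => f ((urn3 θ δ a0 b0 c0 (fun j => V j ω) n).1)) P := by
  obtain ⟨C, hC⟩ := (isCompact_Icc (a := a0) (b := a0 + n * θ)).exists_bound_of_continuousOn
    hf.continuousOn
  have hXnm : Measurable (fun ω => (urn3 θ δ a0 b0 c0 (fun j => V j ω) n).1) :=
    (measurable_urn3 n).fst.comp (measurable_pi_lambda _ fun j => hVm j)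
  refine Integrable.mono' (integrable_const C) (hf.measurable.comp hXnm).aestronglyMeasurable
    (ae_of_all _ fun ω => hC _ ⟨(urn3_comp_ge hθ hδ hδθ _ n).1, urn3_fst_le hθ _ n⟩)

lemma prod_shift_identity (θ : ℝ) (l : ℕ) (x : ℝ) :
    x * ∏ i ∈ Finset.range l, (x + θ + i * θ) =
      (x + l * θ) * ∏ i ∈ Finset.range l, (x + i * θ) := by
  have h1 : ∏ i ∈ Finset.range l, (x + θ + (i:ℕ) * θ)
      = ∏ i ∈ Finset.range l, (x + ((i + 1 : ℕ) : ℝ) * θ) := by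
    apply Finset.prod_congr rfl
    intro i _
    push_cast
    ring
  have h2 := Finset.prod_range_succ' (fun i : ℕ => x + (i : ℝ) * θ) l
  have h3 := Finset.prod_range_succ (fun i : ℕ => x + (i : ℝ) * θ) l
  rw [h1]
  have : ∏ i ∈ Finset.range l, (x + ((i + 1 : ℕ) : ℝ) * θ)
      = ∏ i ∈ Finset.range l, ((fun i : ℕ => x + (i : ℝ) * θ) (i + 1)) := by
    push_cast; rfl
  rw [this]
  calc x * ∏ i ∈ Finset.range l, ((fun i : ℕ => x + (i : ℝ) * θ) (i + 1))
      = (∏ i ∈ Finset.range l, ((fun i : ℕ => x + (i : ℝ) * θ) (i + 1)))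
        * ((fun i : ℕ => x + (i : ℝ) * θ) 0) := by simp; ring
    _ = ∏ i ∈ Finset.range (l + 1), (x + (i : ℝ) * θ) := h2.symm
    _ = (∏ i ∈ Finset.range l, (x + (i : ℝ) * θ)) * (x + l * θ) := h3
    _ = (x + l * θ) * ∏ i ∈ Finset.range l, (x + i * θ) := by ring

lemma urn3_rising_moment
    {Ω : Type*} [MeasurableSpace Ω] (P : Measure Ω) [IsProbabilityMeasure P]
    (V : ℕ → Ω → ℝ) (hVm : ∀ i, Measurable (V i))
    (hindep : iIndepFun V P)
    (hunif : ∀ i, Measure.map (V i) P = volume.restrict (Set.Ico (0:ℝ) 1))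
    (hθ : 0 < θ) (hδ : 0 < δ) (hδθ : δ ≤ θ)
    (ha0 : 0 < a0) (hb0 : 0 < b0) (hc0 : 0 < c0) (l : ℕ) (n : ℕ) :
    ∫ ω, ∏ i ∈ Finset.range l, ((urn3 θ δ a0 b0 c0 (fun j => V j ω) n).1 + i * θ) ∂P
      = (∏ i ∈ Finset.range l, (a0 + i * θ)) *
          ∏ k ∈ Finset.range n, ((a0 + b0 + c0 + (k + l) * θ) / (a0 + b0 + c0 + k * θ)) := by
  have hfc : Continuous (fun x : ℝ => ∏ i ∈ Finset.range l, (x + i * θ)) := by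
    apply continuous_finset_prod
    intro i _
    continuity
  induction n with
  | zero => simp [urn3]
  | succ n ih =>
    have ht : (0:ℝ) < a0 + b0 + c0 + n * θ := by positivity
    rw [urn3_step_integral P V hVm hindep hunif hθ hδ hδθ ha0 hb0 hc0 _ hfc n]
    have hpt : ∀ ω : Ω,
        ((urn3 θ δ a0 b0 c0 (fun j => V j ω) n).1 / (a0+b0+c0+n*θ))
            * (∏ i ∈ Finset.range l, ((urn3 θ δ a0 b0 c0 (fun j => V j ω) n).1 + θ + i * θ))
          + (1 - (urn3 θ δ a0 b0 c0 (fun j => V j ω) n).1 / (a0+b0+c0+n*θ))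
            * (∏ i ∈ Finset.range l, ((urn3 θ δ a0 b0 c0 (fun j => V j ω) n).1 + i * θ))
        = ((a0 + b0 + c0 + (n + l) * θ) / (a0 + b0 + c0 + n * θ))
            * ∏ i ∈ Finset.range l, ((urn3 θ δ a0 b0 c0 (fun j => V j ω) n).1 + i * θ) := by
      intro ω
      set x := (urn3 θ δ a0 b0 c0 (fun j => V j ω) n).1
      have key := prod_shift_identity θ l x
      have ht' : (a0 + b0 + c0 + (n:ℝ) * θ) ≠ 0 := ne_of_gt ht
      have hinv : (a0 + b0 + c0 + (n:ℝ) * θ) * (a0 + b0 + c0 + (n:ℝ) * θ)⁻¹ = 1 := mul_inv_cancel₀ ht'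
      linear_combination (1 / (a0 + b0 + c0 + (n:ℝ) * θ)) * key - (∏ i ∈ Finset.range l, (x + i * θ)) * hinv
    rw [integral_congr_ae (ae_of_all _ hpt), integral_const_mul ((a0 + b0 + c0 + ((n:ℝ) + l) * θ) / (a0 + b0 + c0 + (n:ℝ) * θ)) _,
      ih, Finset.prod_range_succ]
    ring

lemma iIndepFun_congr_ae {Ω : Type*} [MeasurableSpace Ω] {P : Measure Ω} {f g : ℕ → Ω → ℝ}
    (h : iIndepFun f P) (hfg : ∀ i, f i =ᵐ[P] g i) :
    iIndepFun g P := by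
  rw [iIndepFun_iff_measure_inter_preimage_eq_mul] at h ⊢
  intro S sets H
  have h1 : P (⋂ i ∈ S, g i ⁻¹' sets i) = P (⋂ i ∈ S, f i ⁻¹' sets i) := by
    apply measure_congr
    rw [eventuallyEq_set]
    filter_upwards [ae_all_iff.2 hfg] with ω hω
    simp only [Set.mem_iInter, Set.mem_preimage]
    constructor <;> intro hh i hi
    · rw [hω i]; exact hh i hi
    · rw [← hω i]; exact hh i hi
  rw [h1, h S H]
  exact Finset.prod_congr rfl fun i _ =>
    measure_congr (eventuallyEq_set.2 ((hfg i).mono fun ω hω => by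
      simp only [Set.mem_preimage, hω]))



lemma risingFact_eq_prod {x : ℝ} (hx : 0 < x) (l : ℕ) :
    risingFact x l = ∏ i ∈ Finset.range l, (x + i) := by
  induction l with
  | zero => simp [risingFact, div_self (Real.Gamma_pos_of_pos hx).ne']
  | succ l ih =>
    rw [Finset.prod_range_succ, ← ih, risingFact, risingFact]
    have hxl : x + (l:ℝ) ≠ 0 := by positivity
    have h : x + ((l+1 : ℕ) : ℝ) = (x + l) + 1 := by push_cast; ring
    rw [h, Real.Gamma_add_one hxl]
    field_simp

lemma prod_diff_bound (c d : ℕ → ℝ) (M : ℝ) (hM : 0 ≤ M) :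
    ∀ (l : ℕ), (∀ i < l, |c i| ≤ M ∧ |d i| ≤ M) → ∀ x : ℝ, 0 ≤ x →
      |∏ i ∈ Finset.range l, (x + c i) - ∏ i ∈ Finset.range l, (x + d i)|
        ≤ l * (2 * M) * (x + M + 1) ^ (l - 1) := by
  intro l
  induction l with
  | zero => intro _ x hx; simp
  | succ l ih =>
    intro h x hx
    have hbase : (1:ℝ) ≤ x + M + 1 := by linarith
    have hbase0 : (0:ℝ) ≤ x + M + 1 := by linarith
    have hprod : ∀ e : ℕ → ℝ, (∀ i < l + 1, |e i| ≤ M) →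
        |∏ i ∈ Finset.range l, (x + e i)| ≤ (x + M + 1) ^ l := by
      intro e he
      rw [Finset.abs_prod]
      calc ∏ i ∈ Finset.range l, |x + e i|
          ≤ ∏ i ∈ Finset.range l, (x + M + 1) := by
            apply Finset.prod_le_prod (fun i _ => abs_nonneg _)
            intro i hi
            have := he i (Nat.lt_succ_of_lt (Finset.mem_range.mp hi))
            rw [abs_le] at this
            rw [abs_le]; constructor <;> linarith
        _ = (x + M + 1) ^ l := by rw [Finset.prod_const, Finset.card_range]
    rw [Finset.prod_range_succ, Finset.prod_range_succ]
    have expand : (∏ i ∈ Finset.range l, (x + c i)) * (x + c l)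
        - (∏ i ∈ Finset.range l, (x + d i)) * (x + d l)
        = (∏ i ∈ Finset.range l, (x + c i) - ∏ i ∈ Finset.range l, (x + d i)) * (x + c l)
          + (∏ i ∈ Finset.range l, (x + d i)) * (c l - d l) := by ring
    rw [expand]
    have h1 := ih (fun i hi => h i (Nat.lt_succ_of_lt hi)) x hx
    have hcl := (h l (Nat.lt_succ_self l)).1
    have hdl := (h l (Nat.lt_succ_self l)).2
    rw [abs_le] at hcl hdl
    have h2 : |x + c l| ≤ x + M + 1 := by rw [abs_le]; constructor <;> linarith
    have h3 := hprod d (fun i hi => (h i hi).2)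
    have h4 : |c l - d l| ≤ 2 * M := by rw [abs_le]; constructor <;> linarith
    calc |(∏ i ∈ Finset.range l, (x + c i) - ∏ i ∈ Finset.range l, (x + d i)) * (x + c l)
          + (∏ i ∈ Finset.range l, (x + d i)) * (c l - d l)|
        ≤ |(∏ i ∈ Finset.range l, (x + c i) - ∏ i ∈ Finset.range l, (x + d i))| * |x + c l|
          + |∏ i ∈ Finset.range l, (x + d i)| * |c l - d l| := by
          refine (abs_add_le _ _).trans ?_
          rw [abs_mul, abs_mul]
      _ ≤ (l * (2 * M) * (x + M + 1) ^ (l - 1)) * (x + M + 1)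
          + (x + M + 1) ^ l * (2 * M) := by
          gcongr
          all_goals first | exact abs_nonneg _ | positivity | linarith
      _ ≤ ((l + 1 : ℕ) : ℝ) * (2 * M) * (x + M + 1) ^ (l + 1 - 1) := by
          simp only [Nat.add_sub_cancel]
          push_cast
          rcases Nat.eq_zero_or_pos l with rfl | hl
          · simp
          · apply le_of_eq
            have hp : (x + M + 1) ^ (l - 1) * (x + M + 1) = (x + M + 1) ^ l := by
              rw [← pow_succ, Nat.sub_add_cancel hl]
            rw [mul_assoc ((l:ℝ) * (2 * M)), hp]
            ring
    -- cast fix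


set_option maxHeartbeats 1000000 in
/-- the `l`-th factorial moment of the number `X_n` of `x`-balls satisfies
`E[(X_n)_l] = θ^l ((a₀/θ)^{(l)}/(t₀/θ)^{(l)}) n^l + O(n^{l-1})`. -/
theorem urn3_x_factorial_moment
    {Ω : Type*} [MeasurableSpace Ω] (P : Measure Ω) [IsProbabilityMeasure P]
    (U : ℕ → Ω → ℝ)
    (hindep : iIndepFun U P)
    (hunif : ∀ i, Measure.map (U i) P = volume.restrict (Set.Ico (0:ℝ) 1))
    (θ δ a0 b0 c0 : ℝ) (hθ : 0 < θ) (hδ : 0 < δ) (hδθ : δ ≤ θ)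
    (ha0 : 0 < a0) (hb0 : 0 < b0) (hc0 : 0 < c0)
    (t0 : ℝ) (ht0 : t0 = a0 + b0 + c0) (l : ℕ) :
    (fun n : ℕ =>
        (∫ ω, ∏ i ∈ Finset.range l,
            ((urn3 θ δ a0 b0 c0 (fun j => U j ω) n).1 - (i : ℝ)) ∂P)
          - θ ^ l * (risingFact (a0 / θ) l / risingFact (t0 / θ) l) * (n : ℝ) ^ l)
      =O[atTop] (fun n : ℕ => (n : ℝ) ^ ((l : ℝ) - 1)) := by
  have ht0pos : 0 < t0 := by rw [ht0]; positivity
  have haz : 0 < a0 / θ := by positivity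
  have hz0 : 0 < t0 / θ := by positivity
  -- dispose of l = 0
  rcases Nat.eq_zero_or_pos l with rfl | hl
  · have e1 : risingFact (a0/θ) (0:ℝ) = 1 := by simpa using risingFact_eq_prod haz 0
    have e2 : risingFact (t0/θ) (0:ℝ) = 1 := by simpa using risingFact_eq_prod hz0 0
    have hzero : ∀ n : ℕ,
        (∫ ω, ∏ i ∈ Finset.range 0,
            ((urn3 θ δ a0 b0 c0 (fun j => U j ω) n).1 - (i : ℝ)) ∂P)
          - θ ^ 0 * (risingFact (a0 / θ) (0:ℕ) / risingFact (t0 / θ) (0:ℕ)) * (n : ℝ) ^ 0 = 0 := by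
      intro n
      simp [e1, e2]
    rw [isBigO_iff]
    refine ⟨0, Filter.Eventually.of_forall fun n => ?_⟩
    beta_reduce
    rw [hzero n]
    simp
  -- measurable versions of U
  have haeU : ∀ i, AEMeasurable (U i) P := by
    intro i
    by_contra h
    have h1 : (volume.restrict (Set.Ico (0:ℝ) 1)) Set.univ = 1 := by
      simp [Real.volume_Ico]
    rw [← hunif i, Measure.map_of_not_aemeasurable h] at h1
    simp at h1
  set V : ℕ → Ω → ℝ := fun i => (haeU i).mk (U i) with hVdef
  have hVm : ∀ i, Measurable (V i) := fun i => (haeU i).measurable_mk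
  have hUV : ∀ i, U i =ᵐ[P] V i := fun i => (haeU i).ae_eq_mk
  have hindepV : iIndepFun V P := iIndepFun_congr_ae hindep hUV
  have hunifV : ∀ i, Measure.map (V i) P = volume.restrict (Set.Ico (0:ℝ) 1) :=
    fun i => (Measure.map_congr (hUV i)).symm.trans (hunif i)
  have hint_eq : ∀ n : ℕ,
      (∫ ω, ∏ i ∈ Finset.range l, ((urn3 θ δ a0 b0 c0 (fun j => U j ω) n).1 - (i:ℝ)) ∂P)
      = ∫ ω, ∏ i ∈ Finset.range l, ((urn3 θ δ a0 b0 c0 (fun j => V j ω) n).1 - (i:ℝ)) ∂P := by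
    intro n
    apply integral_congr_ae
    filter_upwards [ae_all_iff.2 hUV] with ω hω
    rw [urn3_congr (fun i _ => hω i)]
  -- abbreviations
  set z : ℝ := t0 / θ with hzdef
  set K : ℝ := θ ^ l * (risingFact (a0 / θ) l / risingFact (t0 / θ) l) with hKdef
  have hprodz : (0:ℝ) < ∏ i ∈ Finset.range l, (z + i) := by
    apply Finset.prod_pos; intro i _; positivity
  have hBne : (∏ i ∈ Finset.range l, (z + (i:ℝ))) ≠ 0 := ne_of_gt hprodz
  have hθl : (θ:ℝ) ^ l = ∏ _i ∈ Finset.range l, θ := by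
    rw [Finset.prod_const, Finset.card_range]
  have hstep : ∏ i ∈ Finset.range l, (a0 + (i:ℝ)*θ)
      = (∏ i ∈ Finset.range l, (a0/θ + (i:ℝ))) * θ ^ l := by
    rw [hθl, ← Finset.prod_mul_distrib]
    exact Finset.prod_congr rfl fun i _ => by field_simp
  have hK : K * (∏ i ∈ Finset.range l, (z + (i:ℝ))) = ∏ i ∈ Finset.range l, (a0 + i * θ) := by
    rw [hKdef, risingFact_eq_prod haz, risingFact_eq_prod hz0, hstep]
    field_simp
  -- closed form for rising moments
  have hR : ∀ n : ℕ,
      ∫ ω, ∏ i ∈ Finset.range l, ((urn3 θ δ a0 b0 c0 (fun j => V j ω) n).1 + i * θ) ∂P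
        = K * ∏ i ∈ Finset.range l, ((n:ℝ) + (z + i)) := by
    intro n
    rw [urn3_rising_moment P V hVm hindepV hunifV hθ hδ hδθ ha0 hb0 hc0 l n]
    have hfac : ∀ k : ℕ, (a0 + b0 + c0 + ((k:ℝ) + l) * θ) / (a0 + b0 + c0 + k * θ)
        = (z + k + l) / (z + k) := by
      intro k
      have hth : θ ≠ 0 := ne_of_gt hθ
      have h1 : a0 + b0 + c0 + ((k:ℝ) + l) * θ = θ * (z + k + l) := by
        rw [hzdef, ht0]; field_simp; ring
      have h2 : a0 + b0 + c0 + (k:ℝ) * θ = θ * (z + k) := by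
        rw [hzdef, ht0]; field_simp
      rw [h1, h2, mul_div_mul_left _ _ hth]
    have hQ : ∏ k ∈ Finset.range n, ((a0 + b0 + c0 + ((k:ℝ) + l) * θ) / (a0 + b0 + c0 + k * θ))
        = (∏ k ∈ Finset.range n, (z + k + l)) / ∏ k ∈ Finset.range n, (z + k) := by
      rw [← Finset.prod_div_distrib]
      exact Finset.prod_congr rfl fun k _ => hfac k
    have hcross : (∏ k ∈ Finset.range n, (z + (k:ℝ) + l)) * ∏ i ∈ Finset.range l, (z + i)
        = (∏ k ∈ Finset.range n, (z + (k:ℝ))) * ∏ i ∈ Finset.range l, ((n:ℝ) + (z + i)) := by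
      have h1 := Finset.prod_range_add (fun k : ℕ => z + (k:ℝ)) l n
      have h2 := Finset.prod_range_add (fun k : ℕ => z + (k:ℝ)) n l
      have h3 : ∏ k ∈ Finset.range (l + n), (z + (k:ℝ)) = ∏ k ∈ Finset.range (n + l), (z + (k:ℝ)) := by
        rw [Nat.add_comm]
      rw [h1, h2] at h3
      calc (∏ k ∈ Finset.range n, (z + (k:ℝ) + l)) * ∏ i ∈ Finset.range l, (z + i)
          = (∏ i ∈ Finset.range l, (z + i)) * ∏ k ∈ Finset.range n, (z + ((l + k : ℕ):ℝ)) := by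
            rw [mul_comm]
            congr 1
            exact Finset.prod_congr rfl fun k _ => by push_cast; ring
        _ = (∏ k ∈ Finset.range n, (z + k)) * ∏ i ∈ Finset.range l, (z + ((n + i : ℕ):ℝ)) := h3
        _ = (∏ k ∈ Finset.range n, (z + (k:ℝ))) * ∏ i ∈ Finset.range l, ((n:ℝ) + (z + i)) := by
            congr 1
            exact Finset.prod_congr rfl fun i _ => by push_cast; ring
    have hprodn : (0:ℝ) < ∏ k ∈ Finset.range n, (z + (k:ℝ)) := by
      apply Finset.prod_pos; intro k _; positivity
    rw [hQ, ← hK]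
    have hdiv : (∏ k ∈ Finset.range n, (z + (k:ℝ) + l)) / ∏ k ∈ Finset.range n, (z + (k:ℝ))
        = (∏ i ∈ Finset.range l, ((n:ℝ) + (z + i))) / ∏ i ∈ Finset.range l, (z + (i:ℝ)) := by
      rw [div_eq_div_iff (ne_of_gt hprodn) hBne]
      linarith [hcross]
    rw [hdiv]
    field_simp
  -- bounds
  set M1 : ℝ := (l:ℝ) * (θ + 1) + 1 with hM1def
  have hM1 : 0 ≤ M1 := by positivity
  have hMc : ∀ i < l, |(-(i:ℝ))| ≤ M1 ∧ |(i:ℝ) * θ| ≤ M1 := by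
    intro i hi
    have hil : (i:ℝ) ≤ (l:ℝ) := by exact_mod_cast Nat.le_of_lt hi
    have hl0 : (0:ℝ) ≤ l := Nat.cast_nonneg l
    have hi0 : (0:ℝ) ≤ i := Nat.cast_nonneg i
    constructor
    · rw [abs_neg, abs_of_nonneg hi0, hM1def]
      nlinarith
    · rw [abs_of_nonneg (by positivity), hM1def]
      nlinarith
  have hfall : Continuous (fun x : ℝ => ∏ i ∈ Finset.range l, (x - (i:ℝ))) := by
    apply continuous_finset_prod; intro i _; continuity
  have hrise : Continuous (fun x : ℝ => ∏ i ∈ Finset.range l, (x + (i:ℝ) * θ)) := by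
    apply continuous_finset_prod; intro i _; continuity
  have bound1 : ∀ n : ℕ,
      |(∫ ω, ∏ i ∈ Finset.range l, ((urn3 θ δ a0 b0 c0 (fun j => V j ω) n).1 - (i:ℝ)) ∂P)
        - ∫ ω, ∏ i ∈ Finset.range l, ((urn3 θ δ a0 b0 c0 (fun j => V j ω) n).1 + (i:ℝ) * θ) ∂P|
      ≤ ((l:ℝ) * (2 * M1)) * ((a0 + n * θ) + M1 + 1) ^ (l - 1) := by
    intro n
    rw [← integral_sub (urn3_integrable_comp P V hVm hθ hδ hδθ _ hfall n)
      (urn3_integrable_comp P V hVm hθ hδ hδθ _ hrise n)]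
    have hae : ∀ᵐ ω ∂P, ‖(∏ i ∈ Finset.range l, ((urn3 θ δ a0 b0 c0 (fun j => V j ω) n).1 - (i:ℝ)))
        - ∏ i ∈ Finset.range l, ((urn3 θ δ a0 b0 c0 (fun j => V j ω) n).1 + (i:ℝ) * θ)‖
        ≤ ((l:ℝ) * (2 * M1)) * ((a0 + n * θ) + M1 + 1) ^ (l - 1) := by
      apply ae_of_all
      intro ω
      set x : ℝ := (urn3 θ δ a0 b0 c0 (fun j => V j ω) n).1 with hxdef
      have hx0 : 0 ≤ x := le_trans ha0.le (urn3_comp_ge hθ hδ hδθ _ n).1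
      have hxle : x ≤ a0 + n * θ := urn3_fst_le hθ _ n
      have hpt := prod_diff_bound (fun i => -(i:ℝ)) (fun i => (i:ℝ) * θ) M1 hM1 l hMc x hx0
      simp only [← sub_eq_add_neg] at hpt
      rw [Real.norm_eq_abs]
      refine hpt.trans ?_
      have hmono : (x + M1 + 1) ^ (l - 1) ≤ ((a0 + n * θ) + M1 + 1) ^ (l - 1) :=
        pow_le_pow_left₀ (by linarith) (by linarith) _
      have hc : (0:ℝ) ≤ (l:ℝ) * (2 * M1) := by positivity
      exact mul_le_mul_of_nonneg_left hmono hc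
    refine le_trans ?_ ((norm_integral_le_of_norm_le_const hae).trans (by simp))
    rw [Real.norm_eq_abs]
  set M2 : ℝ := z + (l:ℝ) + 1 with hM2def
  have hM2 : 0 ≤ M2 := by positivity
  have bound2 : ∀ n : ℕ,
      |K * (∏ i ∈ Finset.range l, ((n:ℝ) + (z + i))) - K * (n:ℝ) ^ l|
        ≤ |K| * (((l:ℝ) * (2 * M2)) * ((n:ℝ) + M2 + 1) ^ (l - 1)) := by
    intro n
    rw [← mul_sub, abs_mul]
    have hpow : (n:ℝ) ^ l = ∏ i ∈ Finset.range l, ((n:ℝ) + (0:ℝ)) := by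
      simp [Finset.prod_const, Finset.card_range]
    rw [hpow]
    apply mul_le_mul_of_nonneg_left _ (abs_nonneg K)
    have hMc2 : ∀ i < l, |z + (i:ℝ)| ≤ M2 ∧ |(0:ℝ)| ≤ M2 := by
      intro i hi
      have hil : (i:ℝ) ≤ (l:ℝ) := by exact_mod_cast Nat.le_of_lt hi
      constructor
      · rw [abs_of_nonneg (by positivity), hM2def]; linarith
      · simpa using hM2
    exact prod_diff_bound (fun i => z + (i:ℝ)) (fun _ => (0:ℝ)) M2 hM2 l hMc2 (n:ℝ)
      (Nat.cast_nonneg n)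
  -- final estimate
  set D1 : ℝ := a0 + θ + M1 + 1 with hD1def
  set D2 : ℝ := M2 + 2 with hD2def
  rw [isBigO_iff]
  refine ⟨(l:ℝ) * (2 * M1) * D1 ^ (l - 1) + |K| * ((l:ℝ) * (2 * M2)) * D2 ^ (l - 1),
    ?_⟩
  filter_upwards [eventually_ge_atTop 1] with n hn
  have hn1 : (1:ℝ) ≤ (n:ℝ) := by exact_mod_cast hn
  have hn0 : (0:ℝ) ≤ (n:ℝ) := by linarith
  have hrpow : (n:ℝ) ^ ((l:ℝ) - 1) = (n:ℝ) ^ (l - 1 : ℕ) := by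
    have hcast : ((l:ℝ) - 1) = ((l - 1 : ℕ) : ℝ) := by
      rw [Nat.cast_sub hl]; norm_num
    rw [hcast, Real.rpow_natCast]
  have hnorm2 : ‖(n:ℝ) ^ ((l:ℝ) - 1)‖ = (n:ℝ) ^ (l - 1 : ℕ) := by
    rw [hrpow, Real.norm_eq_abs, abs_of_nonneg (pow_nonneg hn0 _)]
  rw [Real.norm_eq_abs, hint_eq n, hnorm2]
  have hsplit : (∫ ω, ∏ i ∈ Finset.range l, ((urn3 θ δ a0 b0 c0 (fun j => V j ω) n).1 - (i:ℝ)) ∂P)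
      - K * (n:ℝ) ^ l
      = ((∫ ω, ∏ i ∈ Finset.range l, ((urn3 θ δ a0 b0 c0 (fun j => V j ω) n).1 - (i:ℝ)) ∂P)
          - ∫ ω, ∏ i ∈ Finset.range l, ((urn3 θ δ a0 b0 c0 (fun j => V j ω) n).1 + (i:ℝ) * θ) ∂P)
        + ((K * (∏ i ∈ Finset.range l, ((n:ℝ) + (z + i)))) - K * (n:ℝ) ^ l) := by
    rw [hR n]
    ring
  rw [hsplit]
  have hgrow1 : ((a0 + n * θ) + M1 + 1) ^ (l - 1) ≤ D1 ^ (l - 1) * (n:ℝ) ^ (l - 1 : ℕ) := by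
    have h1 : (a0 + (n:ℝ) * θ) + M1 + 1 ≤ D1 * (n:ℝ) := by
      have e : D1 * (n:ℝ) = a0 * (n:ℝ) + θ * (n:ℝ) + M1 * (n:ℝ) + (n:ℝ) := by
        rw [hD1def]; ring
      have f1 : a0 ≤ a0 * (n:ℝ) := le_mul_of_one_le_right ha0.le hn1
      have f2 : M1 ≤ M1 * (n:ℝ) := le_mul_of_one_le_right hM1 hn1
      linarith
    calc ((a0 + (n:ℝ) * θ) + M1 + 1) ^ (l - 1) ≤ (D1 * (n:ℝ)) ^ (l - 1) :=
          pow_le_pow_left₀ (by positivity) h1 _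
      _ = D1 ^ (l - 1) * (n:ℝ) ^ (l - 1 : ℕ) := mul_pow _ _ _
  have hgrow2 : ((n:ℝ) + M2 + 1) ^ (l - 1) ≤ D2 ^ (l - 1) * (n:ℝ) ^ (l - 1 : ℕ) := by
    have h1 : (n:ℝ) + M2 + 1 ≤ D2 * (n:ℝ) := by
      have e : D2 * (n:ℝ) = M2 * (n:ℝ) + 2 * (n:ℝ) := by
        rw [hD2def]; ring
      have f2 : M2 ≤ M2 * (n:ℝ) := le_mul_of_one_le_right hM2 hn1
      linarith
    calc ((n:ℝ) + M2 + 1) ^ (l - 1) ≤ (D2 * (n:ℝ)) ^ (l - 1) :=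
          pow_le_pow_left₀ (by positivity) h1 _
      _ = D2 ^ (l - 1) * (n:ℝ) ^ (l - 1 : ℕ) := mul_pow _ _ _
  refine (abs_add_le _ _).trans ?_
  refine le_trans (add_le_add (bound1 n) (bound2 n)) ?_
  refine le_trans (add_le_add
    (mul_le_mul_of_nonneg_left hgrow1 (by positivity))
    (mul_le_mul_of_nonneg_left
      (mul_le_mul_of_nonneg_left hgrow2 (by positivity)) (abs_nonneg K))) ?_
  apply le_of_eq
  ring
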